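/- arXiv:2602.11906 — 2 statements merged into one kernel-verified Lean document; each statement's English description precedes it below -/
import Mathlib

section
/- Let θ be a ternary relation on ℕ and a, b, k ∈ ℕ. Let X₀ < X₁ < ⋯ < X_{k−1} be pairwise θ-apart ω^a-large*(θ) finite sets such that the set {max X_s : s < k} is ω^{⌊a/2⌋+2b}-large*(θ). Then ⋃_{s<k} X_s is ω^{a+b}-large*(θ). -/
/-- The minimum of a finite set of naturals (`0` if empty). -/
noncomputable def minN (X : Finset ℕ) : ℕ := sInf (X : Set ℕ)

/-- The maximum of a finite set of naturals (`0` if empty). -/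
def maxN (X : Finset ℕ) : ℕ := X.sup id

/-- `E` lies entirely below `F`. -/
def SetBelow (E F : Finset ℕ) : Prop := ∀ x ∈ E, ∀ y ∈ F, x < y

/-- `E` and `F` are `θ`-apart: for every `x < max E` there is `y < min F`
with `θ x y z` for all `z < max F`. -/
def ThetaApart (θ : ℕ → ℕ → ℕ → Prop) (E F : Finset ℕ) : Prop :=
  ∀ x < maxN E, ∃ y < minN F, ∀ z < maxN F, θ x y z

/-- `L·k`: finite sets containing `k` pairwise `θ`-apart members `X₀ < ⋯ < X_{k-1}` of `L`. -/
def MulK (θ : ℕ → ℕ → ℕ → Prop) (L : Set (Finset ℕ)) (k : ℕ) : Set (Finset ℕ) :=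
  {F | ∃ X : Fin k → Finset ℕ, (∀ i, X i ∈ L) ∧ (∀ i, X i ⊆ F) ∧
    ∀ i j, i < j → SetBelow (X i) (X j) ∧ ThetaApart θ (X i) (X j)}

/-- `L·σ` for a finite sequence `σ`: `L·ε = L`, `L·(k⌢τ) = (L·k)·τ`. -/
def MulSeq (θ : ℕ → ℕ → ℕ → Prop) (L : Set (Finset ℕ)) : List ℕ → Set (Finset ℕ)
  | [] => L
  | k :: τ => MulSeq θ (MulK θ L k) τ

/-- `L^θ_n`: the `ω^n`-large*(θ) finite sets. -/
noncomputable def LargeStar (θ : ℕ → ℕ → ℕ → Prop) : ℕ → Set (Finset ℕ)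
  | 0 => {X | X.Nonempty}
  | n + 1 => {X | X.Nonempty ∧
      X.erase (minN X) ∈ MulSeq θ (LargeStar θ n) (List.replicate (n + 1) (minN X))}

/-- `ω^n`-largeness(θ) (the non-starred notion). -/
noncomputable def LargeTheta (θ : ℕ → ℕ → ℕ → Prop) : ℕ → Set (Finset ℕ)
  | 0 => {X | X.Nonempty}
  | n + 1 => {X | X.Nonempty ∧ X.erase (minN X) ∈ MulK θ (LargeTheta θ n) (minN X)}

/-- `L·k` without θ-apartness (plain largeness product). -/
def MulKPlain (L : Set (Finset ℕ)) (k : ℕ) : Set (Finset ℕ) :=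
  {F | ∃ X : Fin k → Finset ℕ, (∀ i, X i ∈ L) ∧ (∀ i, X i ⊆ F) ∧
    ∀ i j, i < j → SetBelow (X i) (X j)}

/-- Ketonen–Solovay `ω^n`-largeness (no θ). -/
noncomputable def LargePlain : ℕ → Set (Finset ℕ)
  | 0 => {X | X.Nonempty}
  | n + 1 => {X | X.Nonempty ∧ X.erase (minN X) ∈ MulKPlain (LargePlain n) (minN X)}

/-- `g`-sparsity. -/
def GSparse (g : ℕ → ℕ) (X : Finset ℕ) : Prop := ∀ x ∈ X, ∀ y ∈ X, x < y → g x < y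

/-- exp-sparsity. -/
def ExpSparse (X : Finset ℕ) : Prop := ∀ x ∈ X, ∀ y ∈ X, x < y → 4 ^ x < y

/-- `ω^k`-sparsity. -/
def OmegaSparse (k : ℕ) (X : Finset ℕ) : Prop :=
  ∀ x ∈ X, ∀ y ∈ X, x < y → Finset.Ioc x y ∈ LargePlain k

section AuxLemmas

variable {θ : ℕ → ℕ → ℕ → Prop}

lemma minN_mem {X : Finset ℕ} (h : X.Nonempty) : minN X ∈ X := by
  have h' : ((X : Set ℕ)).Nonempty := by
    obtain ⟨x, hx⟩ := h
    exact ⟨x, by simpa using hx⟩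
  exact Nat.sInf_mem h'

lemma minN_le {X : Finset ℕ} {x : ℕ} (hx : x ∈ X) : minN X ≤ x :=
  Nat.sInf_le (by simpa using hx)

lemma le_maxN {X : Finset ℕ} {x : ℕ} (hx : x ∈ X) : x ≤ maxN X :=
  Finset.le_sup (f := id) hx

lemma maxN_mem {X : Finset ℕ} (h : X.Nonempty) : maxN X ∈ X := by
  obtain ⟨b, hb, he⟩ := Finset.exists_mem_eq_sup X h id
  rw [maxN, he]; exact hb

lemma maxN_le {X : Finset ℕ} {n : ℕ} (h : ∀ x ∈ X, x ≤ n) : maxN X ≤ n :=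
  Finset.sup_le h

lemma mulK_mono {L L' : Set (Finset ℕ)} (hL : L ⊆ L') {k k' : ℕ} (hk : k' ≤ k) :
    MulK θ L k ⊆ MulK θ L' k' := by
  rintro F ⟨Y, h1, h2, h3⟩
  refine ⟨fun i => Y (Fin.castLE hk i), fun i => hL (h1 _), fun i => h2 _, fun i j hij => ?_⟩
  exact h3 _ _ (show ((Fin.castLE hk i):ℕ) < (Fin.castLE hk j) from hij)

lemma mulK_upward {L : Set (Finset ℕ)} {k : ℕ} {F F' : Finset ℕ}
    (h : F ∈ MulK θ L k) (hFF : F ⊆ F') : F' ∈ MulK θ L k := by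
  obtain ⟨Y, h1, h2, h3⟩ := h
  exact ⟨Y, h1, fun i => (h2 i).trans hFF, h3⟩

lemma mulSeq_append (σ τ : List ℕ) (L : Set (Finset ℕ)) :
    MulSeq θ L (σ ++ τ) = MulSeq θ (MulSeq θ L σ) τ := by
  induction σ generalizing L with
  | nil => rfl
  | cons kk σ ih => exact ih (MulK θ L kk)

lemma mulSeq_rep_succ (L : Set (Finset ℕ)) (j kk : ℕ) :
    MulSeq θ L (List.replicate (j+1) kk) = MulK θ (MulSeq θ L (List.replicate j kk)) kk := by
  rw [List.replicate_succ', mulSeq_append]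
  rfl

lemma mulSeq_rep_mono {L L' : Set (Finset ℕ)} (hL : L ⊆ L') {kk kk' : ℕ} (hk : kk' ≤ kk) :
    ∀ j, MulSeq θ L (List.replicate j kk) ⊆ MulSeq θ L' (List.replicate j kk')
  | 0 => hL
  | (j+1) => by
      rw [mulSeq_rep_succ, mulSeq_rep_succ]
      exact mulK_mono (mulSeq_rep_mono hL hk j) hk

lemma mulSeq_rep_succ_upward {L : Set (Finset ℕ)} {kk j : ℕ} {F F' : Finset ℕ}
    (h : F ∈ MulSeq θ L (List.replicate (j+1) kk)) (hFF : F ⊆ F') :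
    F' ∈ MulSeq θ L (List.replicate (j+1) kk) := by
  rw [mulSeq_rep_succ] at h ⊢
  exact mulK_upward h hFF

lemma largeStar_nonempty : ∀ {n : ℕ} {X : Finset ℕ}, X ∈ LargeStar θ n → X.Nonempty
  | 0, _, h => h
  | (_+1), _, h => h.1

lemma largeStar_succ_iff (n : ℕ) (Y : Finset ℕ) : Y ∈ LargeStar θ (n+1) ↔
    Y.Nonempty ∧ Y.erase (minN Y) ∈ MulSeq θ (LargeStar θ n) (List.replicate (n+1) (minN Y)) :=
  Iff.rfl

lemma largeStar_upward : ∀ {n : ℕ} {X Y : Finset ℕ}, X ∈ LargeStar θ n → X ⊆ Y → Y ∈ LargeStar θ n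
  | 0, _, _, h, hXY => by obtain ⟨x, hx⟩ := h; exact ⟨x, hXY hx⟩
  | (n+1), X, Y, h, hXY => by
    obtain ⟨hne, hmem⟩ := h
    obtain ⟨x, hx⟩ := hne
    have hYne : Y.Nonempty := ⟨x, hXY hx⟩
    have hminle : minN Y ≤ minN X := minN_le (hXY (minN_mem ⟨x, hx⟩))
    refine ⟨hYne, ?_⟩
    have hsub : X.erase (minN X) ⊆ Y.erase (minN Y) := by
      intro w hw
      rw [Finset.mem_erase] at hw ⊢
      have h1 : minN X ≤ w := minN_le hw.2
      obtain ⟨hw1, hw2⟩ := hw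
      refine ⟨fun he => hw1 ?_, hXY hw2⟩
      omega
    exact mulSeq_rep_succ_upward (mulSeq_rep_mono (fun _ h => h) hminle (n+1) hmem) hsub

lemma mem_mulK_of_zero {L : Set (Finset ℕ)} (F : Finset ℕ) : F ∈ MulK θ L 0 :=
  ⟨Fin.elim0, fun i => i.elim0, fun i => i.elim0, fun i => i.elim0⟩

lemma mulSeq_rep_subset {L : Set (Finset ℕ)}
    (hup : ∀ {F F' : Finset ℕ}, F ∈ L → F ⊆ F' → F' ∈ L) {kk : ℕ} (hk : 1 ≤ kk) :
    ∀ j, MulSeq θ L (List.replicate j kk) ⊆ L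
  | 0 => fun _ h => h
  | (j+1) => by
      intro F hF
      rw [mulSeq_rep_succ] at hF
      obtain ⟨Y, h1, h2, _⟩ := hF
      exact hup (mulSeq_rep_subset hup hk j (h1 ⟨0, hk⟩)) (h2 ⟨0, hk⟩)

lemma mulSeq_rep_largeStar {n kk j : ℕ} (hk : 1 ≤ kk) {F : Finset ℕ}
    (h : F ∈ MulSeq θ (LargeStar θ n) (List.replicate j kk)) : F ∈ LargeStar θ n :=
  mulSeq_rep_subset (fun h s => largeStar_upward h s) hk j h

lemma mem_mulSeq_rep_zero {L : Set (Finset ℕ)} (j : ℕ) (F : Finset ℕ) :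
    F ∈ MulSeq θ L (List.replicate (j+1) 0) := by
  rw [mulSeq_rep_succ]; exact mem_mulK_of_zero F

lemma largeStar_succ_subset {n : ℕ} {X : Finset ℕ} (h : X ∈ LargeStar θ (n+1)) :
    X ∈ LargeStar θ n := by
  obtain ⟨hne, hmem⟩ := h
  rcases Nat.eq_zero_or_pos (minN X) with h0 | h1
  · cases n with
    | zero => exact hne
    | succ n =>
      refine ⟨hne, ?_⟩
      rw [h0]
      exact mem_mulSeq_rep_zero _ _
  · exact largeStar_upward (mulSeq_rep_largeStar h1 hmem) (Finset.erase_subset _ _)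

end AuxLemmas
section Collection

variable {θ : ℕ → ℕ → ℕ → Prop} {a k : ℕ} {X : Fin k → Finset ℕ}

/-- The union of the members of the collection whose max lies in `(min Z, max Z]`. -/
noncomputable def gset (X : Fin k → Finset ℕ) (S : Finset (Fin k)) (Z : Finset ℕ) : Finset ℕ :=
  (S.filter fun s => minN Z < maxN (X s) ∧ maxN (X s) ≤ maxN Z).biUnion X

lemma coll_ne (hlarge : ∀ s, X s ∈ LargeStar θ a) (s : Fin k) : (X s).Nonempty :=
  largeStar_nonempty (hlarge s)

lemma coll_maxlt (hlarge : ∀ s, X s ∈ LargeStar θ a)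
    (horder : ∀ s t, s < t → SetBelow (X s) (X t) ∧ ThetaApart θ (X s) (X t))
    {s t : Fin k} (h : maxN (X s) < maxN (X t)) : s < t := by
  rcases lt_trichotomy s t with hc | hc | hc
  · exact hc
  · subst hc; exact absurd h (lt_irrefl _)
  · exfalso
    have hb := (horder t s hc).1
    have := hb _ (maxN_mem (coll_ne hlarge t)) _ (maxN_mem (coll_ne hlarge s))
    omega

lemma gset_subset_biUnion (S : Finset (Fin k)) (Z : Finset ℕ) : gset X S Z ⊆ S.biUnion X := by
  intro w hw
  rw [gset, Finset.mem_biUnion] at hw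
  obtain ⟨s, hs, hws⟩ := hw
  exact Finset.mem_biUnion.2 ⟨s, (Finset.mem_filter.1 hs).1, hws⟩

lemma maxN_gset_le (S : Finset (Fin k)) (Z : Finset ℕ) : maxN (gset X S Z) ≤ maxN Z := by
  apply maxN_le
  intro w hw
  rw [gset, Finset.mem_biUnion] at hw
  obtain ⟨s, hs, hws⟩ := hw
  exact le_trans (le_maxN hws) (Finset.mem_filter.1 hs).2.2

lemma gset_elem_gt (hlarge : ∀ s, X s ∈ LargeStar θ a)
    (horder : ∀ s t, s < t → SetBelow (X s) (X t) ∧ ThetaApart θ (X s) (X t))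
    {S : Finset (Fin k)} {Z : Finset ℕ} (hZM : Z ⊆ S.image fun s => maxN (X s))
    (hZne : Z.Nonempty) {w : ℕ} (hw : w ∈ gset X S Z) : minN Z < w := by
  rw [gset, Finset.mem_biUnion] at hw
  obtain ⟨t, ht, hwt⟩ := hw
  rw [Finset.mem_filter] at ht
  obtain ⟨u, _, hue⟩ := Finset.mem_image.1 (hZM (minN_mem hZne))
  have hut : u < t := coll_maxlt hlarge horder (by rw [hue]; exact ht.2.1)
  have := (horder u t hut).1 _ (maxN_mem (coll_ne hlarge u)) _ hwt
  omega

lemma gset_mono {S : Finset (Fin k)} {Z Z' : Finset ℕ} (hZZ' : Z ⊆ Z') (hZne : Z.Nonempty) :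
    gset X S Z ⊆ gset X S Z' := by
  intro w hw
  rw [gset, Finset.mem_biUnion] at hw ⊢
  obtain ⟨s, hs, hws⟩ := hw
  rw [Finset.mem_filter] at hs
  refine ⟨s, Finset.mem_filter.2 ⟨hs.1, ?_, ?_⟩, hws⟩
  · exact lt_of_le_of_lt (minN_le (hZZ' (minN_mem hZne))) hs.2.1
  · exact le_trans hs.2.2 (Finset.sup_mono hZZ')

lemma gset_below (hlarge : ∀ s, X s ∈ LargeStar θ a)
    (horder : ∀ s t, s < t → SetBelow (X s) (X t) ∧ ThetaApart θ (X s) (X t))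
    {S : Finset (Fin k)} {Z₁ Z₂ : Finset ℕ} (h1 : Z₁.Nonempty) (h2 : Z₂.Nonempty)
    (hb : SetBelow Z₁ Z₂) : SetBelow (gset X S Z₁) (gset X S Z₂) := by
  intro x hx y hy
  rw [gset, Finset.mem_biUnion] at hx hy
  obtain ⟨s, hs, hxs⟩ := hx
  obtain ⟨t, ht, hyt⟩ := hy
  rw [Finset.mem_filter] at hs ht
  have hZ : maxN Z₁ < minN Z₂ := hb _ (maxN_mem h1) _ (minN_mem h2)
  have hst : s < t := coll_maxlt hlarge horder
    (lt_of_le_of_lt hs.2.2 (lt_trans hZ ht.2.1))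
  exact (horder s t hst).1 _ hxs _ hyt

lemma gset_apart (hlarge : ∀ s, X s ∈ LargeStar θ a)
    (horder : ∀ s t, s < t → SetBelow (X s) (X t) ∧ ThetaApart θ (X s) (X t))
    {S : Finset (Fin k)} {Z₁ Z₂ : Finset ℕ} (h2 : Z₂.Nonempty)
    (hZM : Z₂ ⊆ S.image fun s => maxN (X s)) (hg2 : (gset X S Z₂).Nonempty)
    (hap : ThetaApart θ Z₁ Z₂) : ThetaApart θ (gset X S Z₁) (gset X S Z₂) := by
  intro x hx
  obtain ⟨y, hy, hθ⟩ := hap x (lt_of_lt_of_le hx (maxN_gset_le _ _))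
  refine ⟨y, ?_, fun z hz => hθ z (lt_of_lt_of_le hz (maxN_gset_le _ _))⟩
  have := gset_elem_gt hlarge horder hZM h2 (minN_mem hg2)
  omega

end Collection
section Nodes

variable {θ : ℕ → ℕ → ℕ → Prop} {a k : ℕ} {X : Fin k → Finset ℕ}

lemma leafGroup {b : ℕ}
    (IHX : ∀ S' : Finset (Fin k), (S'.image fun s => maxN (X s)) ∈ LargeStar θ (a/2 + 2*b) →
      S'.biUnion X ∈ LargeStar θ (a + b))
    {S : Finset (Fin k)} {Z V : Finset ℕ}
    (hZM : Z ⊆ S.image fun s => maxN (X s))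
    (hV : V ∈ LargeStar θ (a/2 + 2*b)) (hVZ : V ⊆ Z.erase (minN Z)) :
    gset X S Z ∈ LargeStar θ (a + b) := by
  rw [gset]
  apply IHX
  apply largeStar_upward hV
  intro v hv
  have hvZ := hVZ hv
  rw [Finset.mem_erase] at hvZ
  have h1 : minN Z < v := lt_of_le_of_ne (minN_le hvZ.2) (Ne.symm hvZ.1)
  obtain ⟨u, hu, hue⟩ := Finset.mem_image.1 (hZM hvZ.2)
  refine Finset.mem_image.2 ⟨u, Finset.mem_filter.2 ⟨hu, ?_, ?_⟩, hue⟩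
  · rw [hue]; exact h1
  · rw [hue]; exact le_maxN hvZ.2

lemma node0
    (hlarge : ∀ s, X s ∈ LargeStar θ a)
    (horder : ∀ s t, s < t → SetBelow (X s) (X t) ∧ ThetaApart θ (X s) (X t))
    {b : ℕ}
    (IHX : ∀ S' : Finset (Fin k), (S'.image fun s => maxN (X s)) ∈ LargeStar θ (a/2 + 2*b) →
      S'.biUnion X ∈ LargeStar θ (a + b))
    {S : Finset (Fin k)} {m : ℕ} (hm3 : 3 ≤ m) :
    ∀ d r q Z, d + 1 ≤ r → m ≤ q →
      Z ⊆ (S.image fun s => maxN (X s)) →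
      Z ∈ MulSeq θ (LargeStar θ (a/2 + 2*b)) (List.replicate r q) →
      gset X S Z ∈ MulSeq θ (LargeStar θ (a + b)) (List.replicate d m) := by
  intro d
  induction d with
  | zero =>
    intro r q Z hr hq hZM hZmem
    obtain ⟨r', rfl⟩ : ∃ r', r = r' + 1 := ⟨r - 1, by omega⟩
    rw [mulSeq_rep_succ] at hZmem
    obtain ⟨V, hV1, hV2, hV3⟩ := hZmem
    have hq1 : (0:ℕ) < q := by omega
    have hq2 : (1:ℕ) < q := by omega
    have hVL : ∀ i, V i ∈ LargeStar θ (a/2+2*b) :=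
      fun i => mulSeq_rep_largeStar (by omega) (hV1 i)
    have hb01 := (hV3 ⟨0, hq1⟩ ⟨1, hq2⟩ (by simp [Fin.lt_def])).1
    have hsub : V ⟨1, hq2⟩ ⊆ Z.erase (minN Z) := by
      intro w hw
      have hlt := hb01 _ (minN_mem (largeStar_nonempty (hVL ⟨0, hq1⟩))) _ hw
      have hge : minN Z ≤ minN (V ⟨0, hq1⟩) :=
        minN_le (hV2 ⟨0, hq1⟩ (minN_mem (largeStar_nonempty (hVL ⟨0, hq1⟩))))
      exact Finset.mem_erase.2 ⟨by omega, hV2 ⟨1, hq2⟩ hw⟩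
    exact leafGroup IHX hZM (hVL ⟨1, hq2⟩) hsub
  | succ d ihd =>
    intro r q Z hr hq hZM hZmem
    obtain ⟨r', rfl⟩ : ∃ r', r = r' + 1 := ⟨r - 1, by omega⟩
    rw [mulSeq_rep_succ] at hZmem
    obtain ⟨V, hV1, hV2, hV3⟩ := hZmem
    rw [mulSeq_rep_succ]
    have hVL : ∀ i, V i ∈ LargeStar θ (a/2+2*b) :=
      fun i => mulSeq_rep_largeStar (by omega) (hV1 i)
    have hrec : ∀ i : Fin q, gset X S (V i) ∈ MulSeq θ (LargeStar θ (a+b)) (List.replicate d m) :=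
      fun i => ihd r' q (V i) (by omega) hq (fun w hw => hZM (hV2 i hw)) (hV1 i)
    refine ⟨fun i => gset X S (V (Fin.castLE hq i)), fun i => hrec _, ?_, ?_⟩
    · intro i
      exact gset_mono (hV2 _) (largeStar_nonempty (hVL _))
    · intro i j hij
      have hij' : Fin.castLE hq i < Fin.castLE hq j := hij
      obtain ⟨hbe, hap⟩ := hV3 _ _ hij'
      refine ⟨gset_below hlarge horder (largeStar_nonempty (hVL _)) (largeStar_nonempty (hVL _)) hbe, ?_⟩
      refine gset_apart hlarge horder (largeStar_nonempty (hVL _))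
        (fun w hw => hZM (hV2 _ hw)) ?_ hap
      exact largeStar_nonempty (mulSeq_rep_largeStar (by omega : 1 ≤ m) (hrec (Fin.castLE hq j)))

lemma node1
    (h3 : ∀ s, 3 ≤ minN (X s))
    (hlarge : ∀ s, X s ∈ LargeStar θ a)
    (horder : ∀ s t, s < t → SetBelow (X s) (X t) ∧ ThetaApart θ (X s) (X t))
    {b : ℕ}
    (IHX : ∀ S' : Finset (Fin k), (S'.image fun s => maxN (X s)) ∈ LargeStar θ (a/2 + 2*b) →
      S'.biUnion X ∈ LargeStar θ (a + b))
    {S : Finset (Fin k)} {m : ℕ} (hm3 : 3 ≤ m)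
    (hmS : ∀ s ∈ S, m ≤ maxN (X s)) :
    ∀ d r q Z, d ≤ r + (a/2 + 2*b) → m ≤ q →
      Z ⊆ (S.image fun s => maxN (X s)) →
      Z ∈ MulSeq θ (LargeStar θ (a/2 + 2*b + 1)) (List.replicate r q) →
      gset X S Z ∈ MulSeq θ (LargeStar θ (a + b)) (List.replicate d m) := by
  intro d
  induction d with
  | zero =>
    intro r q Z hr hq hZM hZmem
    rcases Nat.eq_zero_or_pos r with rfl | hrpos
    · -- Z ∈ LargeStar θ (c+1); erase its min
      have hZL : Z ∈ LargeStar θ (a/2+2*b+1) := hZmem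
      obtain ⟨hZne, hZe⟩ := (largeStar_succ_iff _ _).1 hZL
      have hminZ3 : 3 ≤ minN Z := by
        obtain ⟨u, _, hue⟩ := Finset.mem_image.1 (hZM (minN_mem hZne))
        have h1 : minN (X u) ≤ maxN (X u) := le_maxN (minN_mem (coll_ne hlarge u))
        have := h3 u
        omega
      have hVc : Z.erase (minN Z) ∈ LargeStar θ (a/2+2*b) :=
        mulSeq_rep_largeStar (by omega) hZe
      exact leafGroup IHX hZM hVc (fun w hw => hw)
    · obtain ⟨r', rfl⟩ : ∃ r', r = r' + 1 := ⟨r - 1, by omega⟩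
      rw [mulSeq_rep_succ] at hZmem
      obtain ⟨V, hV1, hV2, hV3⟩ := hZmem
      have hq1 : (0:ℕ) < q := by omega
      have hq2 : (1:ℕ) < q := by omega
      have hVL : ∀ i, V i ∈ LargeStar θ (a/2+2*b+1) :=
        fun i => mulSeq_rep_largeStar (by omega) (hV1 i)
      have hb01 := (hV3 ⟨0, hq1⟩ ⟨1, hq2⟩ (by simp [Fin.lt_def])).1
      have hsub : V ⟨1, hq2⟩ ⊆ Z.erase (minN Z) := by
        intro w hw
        have hlt := hb01 _ (minN_mem (largeStar_nonempty (hVL ⟨0, hq1⟩))) _ hw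
        have hge : minN Z ≤ minN (V ⟨0, hq1⟩) :=
          minN_le (hV2 ⟨0, hq1⟩ (minN_mem (largeStar_nonempty (hVL ⟨0, hq1⟩))))
        exact Finset.mem_erase.2 ⟨by omega, hV2 ⟨1, hq2⟩ hw⟩
      exact leafGroup IHX hZM (largeStar_succ_subset (hVL ⟨1, hq2⟩)) hsub
  | succ d ihd =>
    intro r q Z hr hq hZM hZmem
    rcases Nat.eq_zero_or_pos r with rfl | hrpos
    · -- descend to the second tier
      have hZL : Z ∈ LargeStar θ (a/2+2*b+1) := hZmem
      obtain ⟨hZne, hZe⟩ := (largeStar_succ_iff _ _).1 hZL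
      have hminZm : m ≤ minN Z := by
        obtain ⟨u, hu, hue⟩ := Finset.mem_image.1 (hZM (minN_mem hZne))
        rw [← hue]; exact hmS u hu
      have h0 := node0 hlarge horder IHX hm3 (d+1) (a/2+2*b+1) (minN Z) (Z.erase (minN Z))
          (by omega) hminZm (fun w hw => hZM (Finset.mem_erase.1 hw).2) hZe
      have hEne : (Z.erase (minN Z)).Nonempty :=
        largeStar_nonempty (mulSeq_rep_largeStar (by omega : 1 ≤ minN Z) hZe)
      exact mulSeq_rep_succ_upward h0 (gset_mono (Finset.erase_subset _ _) hEne)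
    · obtain ⟨r', rfl⟩ : ∃ r', r = r' + 1 := ⟨r - 1, by omega⟩
      rw [mulSeq_rep_succ] at hZmem
      obtain ⟨V, hV1, hV2, hV3⟩ := hZmem
      rw [mulSeq_rep_succ]
      have hVL : ∀ i, V i ∈ LargeStar θ (a/2+2*b+1) :=
        fun i => mulSeq_rep_largeStar (by omega) (hV1 i)
      have hrec : ∀ i : Fin q, gset X S (V i) ∈ MulSeq θ (LargeStar θ (a+b)) (List.replicate d m) :=
        fun i => ihd r' q (V i) (by omega) hq (fun w hw => hZM (hV2 i hw)) (hV1 i)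
      refine ⟨fun i => gset X S (V (Fin.castLE hq i)), fun i => hrec _, ?_, ?_⟩
      · intro i
        exact gset_mono (hV2 _) (largeStar_nonempty (hVL _))
      · intro i j hij
        have hij' : Fin.castLE hq i < Fin.castLE hq j := hij
        obtain ⟨hbe, hap⟩ := hV3 _ _ hij'
        refine ⟨gset_below hlarge horder (largeStar_nonempty (hVL _)) (largeStar_nonempty (hVL _)) hbe, ?_⟩
        refine gset_apart hlarge horder (largeStar_nonempty (hVL _))
          (fun w hw => hZM (hV2 _ hw)) ?_ hap
        exact largeStar_nonempty (mulSeq_rep_largeStar (by omega : 1 ≤ m) (hrec (Fin.castLE hq j)))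

end Nodes
lemma master (θ : ℕ → ℕ → ℕ → Prop) (a : ℕ) (b : ℕ) : ∀ (k : ℕ) (X : Fin k → Finset ℕ),
    (∀ s, 3 ≤ minN (X s)) → (∀ s, X s ∈ LargeStar θ a) →
    (∀ s t, s < t → SetBelow (X s) (X t) ∧ ThetaApart θ (X s) (X t)) →
    ∀ S : Finset (Fin k), (S.image fun s => maxN (X s)) ∈ LargeStar θ (a / 2 + 2 * b) →
    S.biUnion X ∈ LargeStar θ (a + b) := by
  induction b with
  | zero =>
    intro k X h3 hlarge horder S hmax
    obtain ⟨v, hv⟩ := largeStar_nonempty hmax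
    obtain ⟨s, hs, _⟩ := Finset.mem_image.1 hv
    have hsub : X s ⊆ S.biUnion X := fun w hw => Finset.mem_biUnion.2 ⟨s, hs, hw⟩
    exact largeStar_upward (hlarge s) hsub
  | succ b IH =>
    intro k X h3 hlarge horder S hmax
    have hmax' : (S.image fun s => maxN (X s)) ∈ LargeStar θ (a/2 + 2*b + 1 + 1) := by
      rw [show a/2 + 2*b + 1 + 1 = a/2 + 2*(b+1) from by omega]
      exact hmax
    have IHX : ∀ S' : Finset (Fin k), (S'.image fun s => maxN (X s)) ∈ LargeStar θ (a/2 + 2*b) →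
        S'.biUnion X ∈ LargeStar θ (a + b) := fun S' h => IH k X h3 hlarge horder S' h
    obtain ⟨hMne, hMe⟩ := (largeStar_succ_iff _ _).1 hmax'
    -- basic facts
    obtain ⟨u0, hu0, hu0e⟩ := Finset.mem_image.1 (minN_mem hMne)
    have hSne : S.Nonempty := ⟨u0, hu0⟩
    have hUne : (S.biUnion X).Nonempty := by
      obtain ⟨x, hx⟩ := coll_ne hlarge u0
      exact ⟨x, Finset.mem_biUnion.2 ⟨u0, hu0, hx⟩⟩
    have hm_mem := minN_mem hUne
    have hm3 : 3 ≤ minN (S.biUnion X) := by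
      obtain ⟨t, _, hmt⟩ := Finset.mem_biUnion.1 hm_mem
      exact le_trans (h3 t) (minN_le hmt)
    have hmS : ∀ s ∈ S, minN (S.biUnion X) ≤ maxN (X s) := by
      intro s hs
      exact minN_le (Finset.mem_biUnion.2 ⟨s, hs, maxN_mem (coll_ne hlarge s)⟩)
    -- min of image set
    have hμ3 : 3 ≤ minN (S.image fun s => maxN (X s)) := by
      rw [← hu0e]
      exact le_trans (h3 u0) (le_maxN (minN_mem (coll_ne hlarge u0)))
    have hmμ : minN (S.biUnion X) ≤ minN (S.image fun s => maxN (X s)) := by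
      rw [← hu0e]; exact hmS u0 hu0
    -- the key tree construction
    have hkey := node1 h3 hlarge horder IHX hm3 hmS (a + b + 1) (a/2 + 2*b + 1 + 1)
      (minN (S.image fun s => maxN (X s)))
      ((S.image fun s => maxN (X s)).erase (minN (S.image fun s => maxN (X s))))
      (by omega) hmμ (fun w hw => (Finset.mem_erase.1 hw).2) hMe
    -- the erased image set is nonempty
    have hEne : ((S.image fun s => maxN (X s)).erase (minN (S.image fun s => maxN (X s)))).Nonempty :=
      largeStar_nonempty (mulSeq_rep_largeStar (by omega : 1 ≤ minN (S.image fun s => maxN (X s))) hMe)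
    -- the constructed group sits inside (S.biUnion X).erase m
    have hsubU : gset X S ((S.image fun s => maxN (X s)).erase (minN (S.image fun s => maxN (X s))))
        ⊆ (S.biUnion X).erase (minN (S.biUnion X)) := by
      intro w hw
      have h1 := gset_elem_gt hlarge horder
        (fun v hv => (Finset.mem_erase.1 hv).2) hEne hw
      have h2 : minN (S.image fun s => maxN (X s)) ≤
          minN ((S.image fun s => maxN (X s)).erase (minN (S.image fun s => maxN (X s)))) :=
        minN_le (Finset.mem_erase.1 (minN_mem hEne)).2
      refine Finset.mem_erase.2 ⟨by omega, gset_subset_biUnion _ _ hw⟩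
    refine (largeStar_succ_iff (a+b) _).2 ⟨hUne, ?_⟩
    exact mulSeq_rep_succ_upward hkey hsubU

/-- construction. -/
theorem stmt_1 (θ : ℕ → ℕ → ℕ → Prop) (a b k : ℕ) (X : Fin k → Finset ℕ)
    (h3 : ∀ s, 3 ≤ minN (X s))
    (hlarge : ∀ s, X s ∈ LargeStar θ a)
    (horder : ∀ s t, s < t → SetBelow (X s) (X t) ∧ ThetaApart θ (X s) (X t))
    (hmax : (Finset.univ.image fun s => maxN (X s)) ∈ LargeStar θ (a / 2 + 2 * b)) :
    Finset.univ.biUnion X ∈ LargeStar θ (a + b) := by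
  exact master θ a b k X h3 hlarge horder Finset.univ hmax
end

section
/- There is a primitive recursive function B : ℕ³ → ℕ such that for all d ≥ 1 and ℓ, r ∈ ℕ: if T̄ = (T₀, …, T_{d−1}) is a strong d-forest of depth B(d,ℓ,r), then for every coloring g : Leaves(T₀) ∪ ⋯ ∪ Leaves(T_{d−1}) → {0,…,r−1} there exists S̄ = (S₀, …, S_{d−1}) ∈ Str^l_ℓ(T̄) such that for every i < d, g is constant on Leaves(S_i). -/
/-- `(T, f, h)` witnesses a strong `d`-forest of depth `ℓ`: `h` is the level function
and `f i` maps the complete binary tree `2^{≤ℓ}` into `T i`, preserving levels and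
the branching structure. -/
def IsStrongForest (d ℓ : ℕ) (T : Fin d → Finset (List Bool))
    (f : Fin d → List Bool → List Bool) (h : ℕ → ℕ) : Prop :=
  (∀ i : Fin d, ∀ σ : List Bool, σ.length ≤ ℓ →
    f i σ ∈ T i ∧ (f i σ).length = h σ.length) ∧
  (∀ i : Fin d, ∀ σ : List Bool, σ.length < ℓ → ∀ j : Bool,
    (f i σ ++ [j]) <+: f i (σ ++ [j]))

/-- The leaves of the tree embedded by `f` at depth `ℓ`. -/
def Leaves (ℓ : ℕ) (f : List Bool → List Bool) : Set (List Bool) :=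
  {t | ∃ σ : List Bool, σ.length = ℓ ∧ f σ = t}

/-- The bound function: `MHJ 0 k = 0`, `MHJ (ℓ+1) k = k ^ 2 ^ MHJ ℓ k + MHJ ℓ k`. -/
def MHJ : ℕ → ℕ → ℕ
  | 0, _ => 0
  | ℓ + 1, k => k ^ 2 ^ MHJ ℓ k + MHJ ℓ k

lemma MHJ_primrec : Primrec₂ MHJ := by
  have hpow : Primrec₂ (· ^ · : ℕ → ℕ → ℕ) := Primrec₂.unpaired'.1 Nat.Primrec.pow
  have h1 : Primrec₂ (fun (k m : ℕ) => k ^ 2 ^ m) :=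
    hpow.comp₂ Primrec₂.left (hpow.comp₂ (Primrec₂.const 2) Primrec₂.right)
  have := Primrec.nat_rec (α := ℕ) (β := ℕ)
    (f := fun _ => 0) (g := fun k p => k ^ 2 ^ p.2 + p.2)
    (Primrec.const 0)
    (Primrec.nat_add.comp₂ (h1.comp₂ Primrec₂.left (Primrec.snd.comp₂ Primrec₂.right))
      (Primrec.snd.comp₂ Primrec₂.right))
  have h2 : Primrec₂ (fun (k ℓ : ℕ) => MHJ ℓ k) := this.of_eq (by
    intro k ℓ
    induction ℓ with
    | zero => rfl
    | succ n ih => simp [MHJ, ih])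
  exact h2.swap

lemma list_prefix_append_left {l₁ l₂ q : List Bool} (h : l₁ <+: l₂) : q ++ l₁ <+: q ++ l₂ := by
  obtain ⟨t, ht⟩ := h
  exact ⟨t, by rw [List.append_assoc, ht]⟩

/-- Point number `j` on the chain. -/
def Pchain (a j : ℕ) : List Bool :=
  List.replicate j true ++ List.replicate (a - j) false

/-- The combinatorial line through `Pchain a j1` and `Pchain a j2`. -/
def qline (a j1 j2 : ℕ) (x : Bool) : List Bool :=
  List.replicate j1 true ++ (List.replicate (j2 - j1) x ++ List.replicate (a - j2) false)

lemma qline_len {a j1 j2 : ℕ} (h12 : j1 ≤ j2) (h2a : j2 ≤ a) (x : Bool) :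
    (qline a j1 j2 x).length = a := by
  simp only [qline, List.length_append, List.length_replicate]
  omega

lemma qline_false {a j1 j2 : ℕ} (h12 : j1 ≤ j2) (h2a : j2 ≤ a) :
    qline a j1 j2 false = Pchain a j1 := by
  unfold qline Pchain
  rw [List.replicate_append_replicate]
  have h : j2 - j1 + (a - j2) = a - j1 := by omega
  rw [h]

lemma qline_true {a j1 j2 : ℕ} (h12 : j1 ≤ j2) :
    qline a j1 j2 true = Pchain a j2 := by
  unfold qline Pchain
  rw [← List.append_assoc, List.replicate_append_replicate]
  have h : j1 + (j2 - j1) = j2 := by omega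
  rw [h]

lemma qline_prefix {a j1 j2 : ℕ} (h12 : j1 < j2) (x : Bool) :
    List.replicate j1 true ++ [x] <+: qline a j1 j2 x := by
  refine ⟨List.replicate (j2 - j1 - 1) x ++ List.replicate (a - j2) false, ?_⟩
  have h : j2 - j1 = (j2 - j1 - 1) + 1 := by omega
  unfold qline
  rw [h, List.replicate_succ]
  simp [List.append_assoc]

/-- Monochromatic strong-subtree (multidim Hales–Jewett style) lemma for the full binary tree. -/
lemma subtreeHJ (γ : Type) [Fintype γ] [DecidableEq γ] (k : ℕ) (hk : Fintype.card γ ≤ k) :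
    ∀ ℓ : ℕ, ∀ c : List Bool → γ,
    ∃ (e : List Bool → List Bool) (H : ℕ → ℕ),
      (∀ σ : List Bool, σ.length ≤ ℓ → (e σ).length = H σ.length) ∧
      (∀ σ : List Bool, σ.length = ℓ → (e σ).length = MHJ ℓ k) ∧
      (∀ σ : List Bool, σ.length < ℓ → ∀ j : Bool, e σ ++ [j] <+: e (σ ++ [j])) ∧
      (∀ σ τ : List Bool, σ.length = ℓ → τ.length = ℓ → c (e σ) = c (e τ)) := by
  intro ℓ
  induction ℓ with
  | zero =>
    intro c
    refine ⟨fun _ => [], fun _ => 0, ?_, ?_, ?_, ?_⟩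
    · intro σ _; rfl
    · intro σ _; rfl
    · intro σ hσ; exact absurd hσ (Nat.not_lt_zero _)
    · intro σ τ hσ hτ; rfl
  | succ ℓ ih =>
    intro c
    -- pigeonhole on the chain
    have hcard : Fintype.card (List.Vector Bool (MHJ ℓ k) → γ)
        < Fintype.card (Fin (k ^ 2 ^ MHJ ℓ k + 1)) := by
      rw [Fintype.card_fun, Fintype.card_fin, card_vector, Fintype.card_bool]
      have := Nat.pow_le_pow_left hk (2 ^ MHJ ℓ k)
      omega
    obtain ⟨x, y, hxy, hGxy⟩ := Fintype.exists_ne_map_eq_of_card_lt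
      (fun (j : Fin (k ^ 2 ^ MHJ ℓ k + 1)) (v : List.Vector Bool (MHJ ℓ k)) =>
        c (Pchain (k ^ 2 ^ MHJ ℓ k) j ++ v.toList)) hcard
    obtain ⟨j1, j2, hj12, hGj⟩ : ∃ j1 j2 : Fin (k ^ 2 ^ MHJ ℓ k + 1), (j1:ℕ) < j2 ∧
        (fun (v : List.Vector Bool (MHJ ℓ k)) => c (Pchain (k ^ 2 ^ MHJ ℓ k) j1 ++ v.toList))
        = fun v => c (Pchain (k ^ 2 ^ MHJ ℓ k) j2 ++ v.toList) := by
      rcases Ne.lt_or_gt (fun h => hxy (Fin.ext h) : (x:ℕ) ≠ y) with h | h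
      · exact ⟨x, y, h, hGxy⟩
      · exact ⟨y, x, h, hGxy.symm⟩
    have hj2a : (j2 : ℕ) ≤ k ^ 2 ^ MHJ ℓ k := Nat.lt_succ_iff.mp j2.isLt
    have hj12' : (j1 : ℕ) ≤ j2 := le_of_lt hj12
    have hkey : ∀ τ : List Bool, τ.length = MHJ ℓ k →
        c (Pchain (k ^ 2 ^ MHJ ℓ k) j1 ++ τ) = c (Pchain (k ^ 2 ^ MHJ ℓ k) j2 ++ τ) := by
      intro τ hτ
      exact congrFun hGj ⟨τ, hτ⟩
    -- apply IH to the residual coloring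
    obtain ⟨e', H', he'1, he'2, he'3, he'4⟩ := ih (fun τ => c (Pchain (k ^ 2 ^ MHJ ℓ k) j1 ++ τ))
    have hcq : ∀ (x : Bool) τ, τ.length = MHJ ℓ k →
        c (qline (k ^ 2 ^ MHJ ℓ k) j1 j2 x ++ τ) = c (Pchain (k ^ 2 ^ MHJ ℓ k) j1 ++ τ) := by
      intro x τ hτ
      cases x
      · rw [qline_false hj12' hj2a]
      · rw [qline_true hj12']; exact (hkey τ hτ).symm
    -- build the embedding
    refine ⟨fun σ => match σ with
              | [] => List.replicate (j1:ℕ) true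
              | x :: ρ => qline (k ^ 2 ^ MHJ ℓ k) j1 j2 x ++ e' ρ,
            fun m => match m with
              | 0 => (j1:ℕ)
              | t + 1 => k ^ 2 ^ MHJ ℓ k + H' t, ?_, ?_, ?_, ?_⟩
    · intro σ hσ
      match σ with
      | [] => simp
      | x :: ρ =>
        simp only [List.length_cons] at hσ ⊢
        rw [List.length_append, qline_len hj12' hj2a, he'1 ρ (by omega)]
    · intro σ hσ
      match σ with
      | x :: ρ =>
        simp only [List.length_cons, Nat.succ_inj] at hσ
        rw [List.length_append, qline_len hj12' hj2a, he'2 ρ hσ]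
        rfl
    · intro σ hσ j
      match σ with
      | [] =>
        show List.replicate (j1:ℕ) true ++ [j] <+: qline (k ^ 2 ^ MHJ ℓ k) j1 j2 j ++ e' []
        exact (qline_prefix hj12 j).trans (List.prefix_append _ _)
      | x :: ρ =>
        simp only [List.length_cons] at hσ
        show (qline (k ^ 2 ^ MHJ ℓ k) j1 j2 x ++ e' ρ) ++ [j]
          <+: qline (k ^ 2 ^ MHJ ℓ k) j1 j2 x ++ e' (ρ ++ [j])
        rw [List.append_assoc]
        exact list_prefix_append_left (he'3 ρ (by omega) j)
    · intro σ τ hσ hτ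
      match σ, τ with
      | x :: ρ, y :: δ =>
        simp only [List.length_cons, Nat.succ_inj] at hσ hτ
        show c (qline (k ^ 2 ^ MHJ ℓ k) j1 j2 x ++ e' ρ)
          = c (qline (k ^ 2 ^ MHJ ℓ k) j1 j2 y ++ e' δ)
        rw [hcq x _ (he'2 ρ hσ), hcq y _ (he'2 δ hτ)]
        exact he'4 ρ δ hσ hτ

lemma forest_mono {d B : ℕ} {T : Fin d → Finset (List Bool)} {f : Fin d → List Bool → List Bool}
    {h : ℕ → ℕ} (hF : IsStrongForest d B T f h) (i : Fin d) :
    ∀ τ' τ : List Bool, τ <+: τ' → τ'.length ≤ B → f i τ <+: f i τ' := by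
  intro τ'
  induction τ' using List.reverseRecOn with
  | nil => intro τ hp _; rw [List.prefix_nil.mp hp]
  | append_singleton ρ j ihr =>
    intro τ hp hlen
    by_cases heq : τ = ρ ++ [j]
    · rw [heq]
    · have hlt : τ.length ≤ ρ.length := by
        have h1 := hp.length_le
        simp only [List.length_append, List.length_singleton] at h1
        rcases Nat.lt_or_ge τ.length (ρ.length + 1) with h2 | h2
        · omega
        · exact absurd (hp.eq_of_length (by simp; omega)) heq
      have hτρ : τ <+: ρ := by
        have h3 := List.prefix_iff_eq_take.mp hp
        rw [List.take_append_of_le_length hlt] at h3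
        rw [h3]
        exact List.take_prefix _ _
      have hρlen : ρ.length + 1 ≤ B := by
        simpa using hlen
      have h1 : f i τ <+: f i ρ := ihr τ hτρ (by omega)
      have h2 : f i ρ ++ [j] <+: f i (ρ ++ [j]) := hF.2 i ρ (by omega) j
      exact h1.trans ((List.prefix_append _ _).trans h2)


/-- homogenization of a coloring of leaves of a strong `d`-forest. -/
theorem stmt_12 :
    ∃ B : ℕ → ℕ → ℕ → ℕ,
      Nat.Primrec (fun c : ℕ => B c.unpair.1 c.unpair.2.unpair.1 c.unpair.2.unpair.2) ∧
      ∀ d : ℕ, 1 ≤ d → ∀ ℓ r : ℕ,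
        ∀ (T : Fin d → Finset (List Bool)) (f : Fin d → List Bool → List Bool) (h : ℕ → ℕ),
          IsStrongForest d (B d ℓ r) T f h →
          ∀ g : List Bool → ℕ,
            (∀ i : Fin d, ∀ t ∈ Leaves (B d ℓ r) (f i), g t < r) →
            ∃ (S : Fin d → Finset (List Bool)) (fS : Fin d → List Bool → List Bool)
              (hS : ℕ → ℕ),
              IsStrongForest d ℓ S fS hS ∧
              (∀ i : Fin d, Leaves ℓ (fS i) ⊆ Leaves (B d ℓ r) (f i)) ∧
              ∀ i : Fin d, ∀ s ∈ Leaves ℓ (fS i), ∀ t ∈ Leaves ℓ (fS i), g s = g t := by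
  refine ⟨fun d ℓ r => MHJ ℓ (r ^ d), ?_, ?_⟩
  · rw [← Primrec.nat_iff]
    have hu : Primrec Nat.unpair := Primrec.unpair
    have h2 : Primrec (fun c : ℕ => c.unpair.2) := Primrec.snd.comp hu
    have hℓ : Primrec (fun c : ℕ => c.unpair.2.unpair.1) := Primrec.fst.comp (hu.comp h2)
    have hr : Primrec (fun c : ℕ => c.unpair.2.unpair.2) := Primrec.snd.comp (hu.comp h2)
    have hd : Primrec (fun c : ℕ => c.unpair.1) := Primrec.fst.comp hu
    have hpow : Primrec₂ (· ^ · : ℕ → ℕ → ℕ) := Primrec₂.unpaired'.1 Nat.Primrec.pow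
    exact MHJ_primrec.comp hℓ (hpow.comp hr hd)
  · intro d hd ℓ r T f h hF g hg
    have hr : 0 < r := by
      have hleaf : f ⟨0, hd⟩ (List.replicate (MHJ ℓ (r ^ d)) false)
          ∈ Leaves (MHJ ℓ (r ^ d)) (f ⟨0, hd⟩) :=
        ⟨List.replicate (MHJ ℓ (r ^ d)) false, by simp, rfl⟩
      have := hg ⟨0, hd⟩ _ hleaf
      omega
    have hcard : Fintype.card (Fin d → Fin r) ≤ r ^ d := by
      simp [Fintype.card_fun]
    obtain ⟨e, H, he1, he2, he3, he4⟩ := subtreeHJ (Fin d → Fin r) (r ^ d) hcard ℓ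
      (fun τ (i : Fin d) => (⟨g (f i τ) % r, Nat.mod_lt _ hr⟩ : Fin r))
    -- monotonicity of e along extension by falses
    have emono : ∀ m σ, σ.length + m ≤ ℓ → e σ <+: e (σ ++ List.replicate m false) := by
      intro m
      induction m with
      | zero => intro σ _; simp
      | succ mm ihm =>
        intro σ hσ
        have h1 : e σ <+: e (σ ++ [false]) :=
          (List.prefix_append _ _).trans (he3 σ (by omega) false)
        have h2 := ihm (σ ++ [false]) (by simp; omega)
        have h3 : σ ++ List.replicate (mm + 1) false
            = (σ ++ [false]) ++ List.replicate mm false := by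
          simp [List.replicate_succ, List.append_assoc]
        rw [h3]
        exact h1.trans h2
    have elen_le : ∀ σ : List Bool, σ.length ≤ ℓ → (e σ).length ≤ MHJ ℓ (r ^ d) := by
      intro σ hσ
      have h1 := (emono (ℓ - σ.length) σ (by omega)).length_le
      have h2 := he2 (σ ++ List.replicate (ℓ - σ.length) false) (by simp; omega)
      omega
    -- leaves of e are leaves of the big trees
    have eleaf : ∀ i : Fin d, ∀ σ : List Bool, σ.length = ℓ →
        f i (e σ) ∈ Leaves (MHJ ℓ (r ^ d)) (f i) := by
      intro i σ hσ
      exact ⟨e σ, he2 σ hσ, rfl⟩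
    refine ⟨fun i => (Finset.range (ℓ + 1)).biUnion
        (fun m => Finset.image (fun v : List.Vector Bool m => f i (e v.toList)) Finset.univ),
      fun i σ => f i (e σ), fun m => h (H m), ⟨?_, ?_⟩, ?_, ?_⟩
    · intro i σ hσ
      constructor
      · rw [Finset.mem_biUnion]
        refine ⟨σ.length, Finset.mem_range.mpr (by omega), ?_⟩
        rw [Finset.mem_image]
        exact ⟨⟨σ, rfl⟩, Finset.mem_univ _, rfl⟩
      · rw [(hF.1 i (e σ) (elen_le σ hσ)).2, he1 σ hσ]
    · intro i σ hσ j
      have hp := he3 σ hσ j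
      have hlen2 : (e (σ ++ [j])).length ≤ MHJ ℓ (r ^ d) :=
        elen_le (σ ++ [j]) (by simp; omega)
      have hlen1 : (e σ).length < MHJ ℓ (r ^ d) := by
        have := hp.length_le
        simp only [List.length_append, List.length_singleton] at this
        omega
      exact ((hF.2 i (e σ) hlen1 j).trans (forest_mono hF i _ _ hp hlen2))
    · intro i s hs
      obtain ⟨σ, hσ, rfl⟩ := hs
      exact eleaf i σ hσ
    · intro i s hs t ht
      obtain ⟨σ, hσ, rfl⟩ := hs
      obtain ⟨τ, hτ, rfl⟩ := ht
      have hce := congrArg Fin.val (congrFun (he4 σ τ hσ hτ) i)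
      simp only at hce
      have h1 : g (f i (e σ)) < r := hg i _ (eleaf i σ hσ)
      have h2 : g (f i (e τ)) < r := hg i _ (eleaf i τ hτ)
      rwa [Nat.mod_eq_of_lt h1, Nat.mod_eq_of_lt h2] at hce
end
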